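/- Let ω, h ∈ ℝ, and let u, v : ℝ → ℝ be twice differentiable functions satisfying u''(t) + ω²·u(t) = 0 and v''(t) + ω²·v(t) = 0 for all t. Let W = u(0)·v'(0) − u'(0)·v(0) and suppose W ≠ 0. Let A, B, C be real constants with (A·C − B²)·W² = h², and suppose w(t) := A·u(t)² + 2B·u(t)·v(t) + C·v(t)² > 0 for all t. Then x(t) := √(w(t)) satisfies the Ermakov–Pinney equation x''(t) + ω²·x(t) = h²/x(t)³ for all t. -/

import Mathlib

/-- Pinney's solution: if `u, v` solve `y'' + ω² y = 0` with nonzero Wronskian `W`,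
`(AC − B²)W² = h²`, and `w = Au² + 2Buv + Cv² > 0`, then `x = √w` solves the
Ermakov–Pinney equation `x'' + ω² x = h²/x³`. -/
theorem pinney_solution
    (ω h : ℝ) (u v : ℝ → ℝ)
    (hu : Differentiable ℝ u) (hu' : Differentiable ℝ (deriv u))
    (hv : Differentiable ℝ v) (hv' : Differentiable ℝ (deriv v))
    (hueq : ∀ t, deriv (deriv u) t + ω ^ 2 * u t = 0)
    (hveq : ∀ t, deriv (deriv v) t + ω ^ 2 * v t = 0)
    (W : ℝ) (hW : W = u 0 * deriv v 0 - deriv u 0 * v 0) (hWne : W ≠ 0)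
    (A B C : ℝ) (hABC : (A * C - B ^ 2) * W ^ 2 = h ^ 2)
    (hwpos : ∀ t, A * u t ^ 2 + 2 * B * u t * v t + C * v t ^ 2 > 0) :
    ∀ t, deriv (deriv fun s => Real.sqrt (A * u s ^ 2 + 2 * B * u s * v s + C * v s ^ 2)) t
          + ω ^ 2 * Real.sqrt (A * u t ^ 2 + 2 * B * u t * v t + C * v t ^ 2)
        = h ^ 2 / (Real.sqrt (A * u t ^ 2 + 2 * B * u t * v t + C * v t ^ 2)) ^ 3 := by
  intro t
  -- second derivatives
  have hu2 : ∀ s, deriv (deriv u) s = -(ω ^ 2 * u s) := fun s => by linarith [hueq s]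
  have hv2 : ∀ s, deriv (deriv v) s = -(ω ^ 2 * v s) := fun s => by linarith [hveq s]
  have hud : ∀ s, HasDerivAt u (deriv u s) s := fun s => (hu s).hasDerivAt
  have hvd : ∀ s, HasDerivAt v (deriv v s) s := fun s => (hv s).hasDerivAt
  have hud' : ∀ s, HasDerivAt (deriv u) (-(ω ^ 2 * u s)) s := fun s => by
    have := (hu' s).hasDerivAt; rwa [hu2 s] at this
  have hvd' : ∀ s, HasDerivAt (deriv v) (-(ω ^ 2 * v s)) s := fun s => by
    have := (hv' s).hasDerivAt; rwa [hv2 s] at this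
  -- abbreviations
  set w : ℝ → ℝ := fun s => A * u s ^ 2 + 2 * B * u s * v s + C * v s ^ 2 with hwdef
  set p : ℝ → ℝ := fun s => A * u s * deriv u s + B * (deriv u s * v s + u s * deriv v s)
      + C * v s * deriv v s with hpdef
  -- w has derivative 2p
  have hwD : ∀ s, HasDerivAt w (2 * p s) s := by
    intro s
    have h1 : HasDerivAt (fun y => A * u y ^ 2) (A * (2 * u s ^ 1 * deriv u s)) s :=
      ((hud s).pow 2).const_mul A
    have h2 : HasDerivAt (fun y => 2 * B * u y * v y)
        (2 * B * deriv u s * v s + 2 * B * u s * deriv v s) s :=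
      (((hud s).const_mul (2 * B)).mul (hvd s))
    have h3 : HasDerivAt (fun y => C * v y ^ 2) (C * (2 * v s ^ 1 * deriv v s)) s :=
      ((hvd s).pow 2).const_mul C
    have := (h1.add h2).add h3
    refine this.congr_deriv ?_
    simp [hpdef]; ring
  -- p has derivative q - ω² w, where q = A u'² + 2B u'v' + C v'²
  have hpD : ∀ s, HasDerivAt p
      ((A * deriv u s ^ 2 + 2 * B * deriv u s * deriv v s + C * deriv v s ^ 2)
        - ω ^ 2 * w s) s := by
    intro s
    have h1 : HasDerivAt (fun y => A * u y * deriv u y)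
        ((A * deriv u s) * deriv u s + (A * u s) * (-(ω ^ 2 * u s))) s :=
      ((hud s).const_mul A).mul (hud' s)
    have h2 : HasDerivAt (fun y => B * (deriv u y * v y + u y * deriv v y))
        (B * (((-(ω ^ 2 * u s)) * v s + deriv u s * deriv v s)
          + (deriv u s * deriv v s + u s * (-(ω ^ 2 * v s))))) s :=
      (((hud' s).mul (hvd s)).add ((hud s).mul (hvd' s))).const_mul B
    have h3 : HasDerivAt (fun y => C * v y * deriv v y)
        ((C * deriv v s) * deriv v s + (C * v s) * (-(ω ^ 2 * v s))) s :=
      ((hvd s).const_mul C).mul (hvd' s)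
    have := (h1.add h2).add h3
    refine this.congr_deriv ?_
    simp [hwdef]; ring
  -- Wronskian is constant
  have hWr : ∀ s, u s * deriv v s - deriv u s * v s = W := by
    intro s
    have hd : ∀ r, HasDerivAt (fun y => u y * deriv v y - deriv u y * v y) 0 r := by
      intro r
      have := ((hud r).mul (hvd' r)).sub ((hud' r).mul (hvd r))
      refine this.congr_deriv ?_; ring
    have hc : ∀ r, deriv (fun y => u y * deriv v y - deriv u y * v y) r = 0 :=
      fun r => (hd r).deriv
    have hdf : Differentiable ℝ (fun y => u y * deriv v y - deriv u y * v y) :=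
      fun r => (hd r).differentiableAt
    have := is_const_of_deriv_eq_zero hdf hc s 0
    simpa [hW] using this
  -- first derivative of √w
  have hxD : ∀ s, HasDerivAt (fun y => Real.sqrt (w y)) (p s / Real.sqrt (w s)) s := by
    intro s
    have := (hwD s).sqrt (ne_of_gt (hwpos s))
    convert this using 1
    rw [mul_div_mul_left _ _ (two_ne_zero)]
  have hderiv1 : deriv (fun y => Real.sqrt (w y)) = fun s => p s / Real.sqrt (w s) :=
    funext fun s => (hxD s).deriv
  -- second derivative
  have hs : Real.sqrt (w t) > 0 := Real.sqrt_pos.mpr (hwpos t)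
  have hsne : Real.sqrt (w t) ≠ 0 := ne_of_gt hs
  have hsq : Real.sqrt (w t) ^ 2 = w t := Real.sq_sqrt (le_of_lt (hwpos t))
  set q : ℝ := A * deriv u t ^ 2 + 2 * B * deriv u t * deriv v t + C * deriv v t ^ 2 with hq
  have hx2D : HasDerivAt (fun s => p s / Real.sqrt (w s))
      (((q - ω ^ 2 * w t) * Real.sqrt (w t) - p t * (p t / Real.sqrt (w t)))
        / Real.sqrt (w t) ^ 2) t :=
    (hpD t).div (hxD t) hsne
  have hd2 : deriv (deriv fun s => Real.sqrt (w s)) t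
      = ((q - ω ^ 2 * w t) * Real.sqrt (w t) - p t * (p t / Real.sqrt (w t)))
        / Real.sqrt (w t) ^ 2 := by
    rw [hderiv1]; exact hx2D.deriv
  -- key algebraic identity
  have key : w t * q - p t ^ 2 = h ^ 2 := by
    have : w t * q - p t ^ 2
        = (A * C - B ^ 2) * (u t * deriv v t - deriv u t * v t) ^ 2 := by
      simp only [hwdef, hpdef, hq]; ring
    rw [this, hWr t, hABC]
  show deriv (deriv fun s => Real.sqrt (w s)) t + ω ^ 2 * Real.sqrt (w t)
      = h ^ 2 / Real.sqrt (w t) ^ 3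
  rw [hd2, ← key]
  field_simp
  linear_combination (q + ω ^ 2 * Real.sqrt (w t) ^ 2) * hsq
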